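/- Let V_1, ..., V_n be n ≥ 2 distributions on ℝ and let α ≥ 0. For p = (p_1,...,p_n) in the open simplex Δ = {p ∈ (0,1)^n : Σ p_i = 1}, write V_p = Σ_{i=1}^n p_i V_i. The following are equivalent: (a) V_p ∈ S(α) for every p ∈ Δ; (b) V_p ∈ S(α) for some p ∈ Δ and, for every y ∈ ℝ and every i = 1,...,n, V̄_i(x−y) − e^{αy} V̄_i(x) = o(Σ_{j=1}^n V̄_j(x)) as x → ∞. -/

import Mathlib

open MeasureTheory ProbabilityTheory Filter Asymptotics

noncomputable section

/-- The tail function `Ū(x) = U((x,∞))` of a measure on `ℝ`. -/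
def tailDist (μ : Measure ℝ) (x : ℝ) : ℝ := (μ (Set.Ioi x)).toReal

/-- Convolution of two measures on `ℝ`. -/
def convDist (μ ν : Measure ℝ) : Measure ℝ := (μ.prod ν).map (fun p => p.1 + p.2)

/-- The distribution with CDF `V(x)𝟙_{x ≥ 0}`, i.e. the pushforward under `x ↦ max x 0`. -/
def posMod (μ : Measure ℝ) : Measure ℝ := μ.map (fun x => max x 0)

/-- `V̂(α) = ∫ e^{αx} V(dx)`. -/
def mgfVal (μ : Measure ℝ) (α : ℝ) : ℝ := ∫ x, Real.exp (α * x) ∂μ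

/-- The convolution-equivalence class `S(α)`: a distribution `V` on `ℝ` is in `S(α)` if
the distribution with CDF `V(x)𝟙_{x ≥ 0}` has everywhere positive tail,
`V̄(x-y)/V̄(x) → e^{αy}` for all `y`, `V̂(α) = ∫ e^{αx} V(dx) < ∞`, and
`\overline{V^{2*}}(x)/V̄(x) → 2V̂(α)`. -/
def MemCE (α : ℝ) (V : Measure ℝ) : Prop :=
  (∀ x : ℝ, 0 < tailDist (posMod V) x) ∧
  (∀ y : ℝ, Tendsto (fun x => tailDist (posMod V) (x - y) / tailDist (posMod V) x)
      atTop (nhds (Real.exp (α * y)))) ∧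
  Integrable (fun x => Real.exp (α * x)) (posMod V) ∧
  Tendsto (fun x => tailDist (convDist (posMod V) (posMod V)) x / tailDist (posMod V) x)
      atTop (nhds (2 * mgfVal (posMod V) α))

/-- Strongly regular variation `R*_{-α}`: the distribution `V` with tail
`V̄(x) = Ū(eˣ)/Ū(0)` (i.e. the conditional law of `ln ξ` given `ξ > 0`, where `ξ ∼ U`)
belongs to `S(α)`. -/
def MemSRV (α : ℝ) (U : Measure ℝ) : Prop :=
  U (Set.Ioi 0) ≠ 0 ∧
  MemCE α (((U (Set.Ioi 0))⁻¹ • U.restrict (Set.Ioi 0)).map Real.log)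

/-- Regular variation `R_{-α}`: `Ū(x) > 0` for all `x` and `Ū(xy)/Ū(x) → y^{-α}` for `y > 0`. -/
def MemRV (α : ℝ) (U : Measure ℝ) : Prop :=
  (∀ x : ℝ, 0 < tailDist U x) ∧
  ∀ y : ℝ, 0 < y →
    Tendsto (fun x => tailDist U (x * y) / tailDist U x) atTop (nhds (y ^ (-α)))

/-- Assumption A: every convex combination `pF + (1-p)G`, `0 < p < 1`,
is of strongly regular variation with index `-α`. -/
def AssumpA (α : ℝ) (F G : Measure ℝ) : Prop :=
  ∀ p : ℝ, 0 < p → p < 1 →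
    MemSRV α (ENNReal.ofReal p • F + ENNReal.ofReal (1 - p) • G)

end
noncomputable section
open Set
open scoped ENNReal

lemma tailDist_nonneg {μ : Measure ℝ} {x : ℝ} : 0 ≤ tailDist μ x := ENNReal.toReal_nonneg

lemma tailDist_anti {μ : Measure ℝ} [IsFiniteMeasure μ] : Antitone (tailDist μ) := by
  intro a b hab
  exact ENNReal.toReal_mono (measure_ne_top _ _) (measure_mono (Set.Ioi_subset_Ioi hab))

lemma measurable_tailDist {μ : Measure ℝ} [IsFiniteMeasure μ] : Measurable (tailDist μ) :=
  tailDist_anti.measurable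

lemma tailDist_le_one {μ : Measure ℝ} [IsProbabilityMeasure μ] {x : ℝ} : tailDist μ x ≤ 1 := by
  rw [tailDist, ← ENNReal.toReal_one]
  exact ENNReal.toReal_mono ENNReal.one_ne_top prob_le_one

lemma posMod_apply_Ioi (μ : Measure ℝ) {x : ℝ} (hx : 0 ≤ x) :
    posMod μ (Set.Ioi x) = μ (Set.Ioi x) := by
  rw [posMod, Measure.map_apply (by fun_prop) measurableSet_Ioi]
  congr 1
  ext t
  simp only [Set.mem_preimage, Set.mem_Ioi, lt_max_iff]
  constructor
  · rintro (h | h)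
    · exact h
    · linarith
  · intro h; left; exact h

lemma tailDist_posMod_eq (μ : Measure ℝ) {x : ℝ} (hx : 0 ≤ x) :
    tailDist (posMod μ) x = tailDist μ x := by
  rw [tailDist, tailDist, posMod_apply_Ioi μ hx]

instance posMod_prob (μ : Measure ℝ) [IsProbabilityMeasure μ] :
    IsProbabilityMeasure (posMod μ) :=
  Measure.isProbabilityMeasure_map (by fun_prop)


variable {n : ℕ}

lemma posMod_mix (V : Fin n → Measure ℝ) (p : Fin n → ℝ) :
    posMod (∑ i, ENNReal.ofReal (p i) • V i) = ∑ i, ENNReal.ofReal (p i) • posMod (V i) := by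
  unfold posMod
  induction (Finset.univ : Finset (Fin n)) using Finset.induction with
  | empty => simp [Measure.map_zero]
  | insert _ _ h ih =>
      rw [Finset.sum_insert h, Finset.sum_insert h, Measure.map_add _ _ (by fun_prop),
        Measure.map_smul, ih]

lemma mix_prob (V : Fin n → Measure ℝ) [∀ i, IsProbabilityMeasure (V i)]
    (p : Fin n → ℝ) (hp : ∀ i, 0 ≤ p i) (hsum : ∑ i, p i = 1) :
    IsProbabilityMeasure (∑ i, ENNReal.ofReal (p i) • V i) := by
  constructor
  rw [Measure.finset_sum_apply]
  simp only [Measure.smul_apply, smul_eq_mul, measure_univ, mul_one]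
  rw [← ENNReal.ofReal_sum_of_nonneg (fun i _ => hp i), hsum, ENNReal.ofReal_one]

lemma tailDist_mix (μ : Fin n → Measure ℝ) [∀ i, IsFiniteMeasure (μ i)]
    (p : Fin n → ℝ) (hp : ∀ i, 0 ≤ p i) (x : ℝ) :
    tailDist (∑ i, ENNReal.ofReal (p i) • μ i) x = ∑ i, p i * tailDist (μ i) x := by
  rw [tailDist, Measure.finset_sum_apply]
  rw [ENNReal.toReal_sum (fun i _ => ?_)]
  · refine Finset.sum_congr rfl (fun i _ => ?_)
    rw [Measure.smul_apply, smul_eq_mul, ENNReal.toReal_mul, ENNReal.toReal_ofReal (hp i)]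
    rfl
  · rw [Measure.smul_apply, smul_eq_mul]
    exact ENNReal.mul_ne_top ENNReal.ofReal_ne_top (measure_ne_top _ _)


lemma conv_tail_decomp (μ : Measure ℝ) [IsFiniteMeasure μ] (x : ℝ) :
    convDist μ μ (Set.Ioi x) =
      2 * ∫⁻ a in Set.Iic (x/2), μ (Set.Ioi (x - a)) ∂μ
        + μ (Set.Ioi (x/2)) * μ (Set.Ioi (x/2)) := by
  have hadd : Measurable (fun p : ℝ × ℝ => p.1 + p.2) := by fun_prop
  rw [convDist, Measure.map_apply hadd measurableSet_Ioi]
  have hE : (fun p : ℝ × ℝ => p.1 + p.2) ⁻¹' Set.Ioi x = {p : ℝ × ℝ | x < p.1 + p.2} := rfl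
  set E1 : Set (ℝ × ℝ) := {p | p.1 ≤ x/2 ∧ x < p.1 + p.2} with hE1
  set E2 : Set (ℝ × ℝ) := {p | p.2 ≤ x/2 ∧ x/2 < p.1 ∧ x < p.1 + p.2} with hE2
  set E3 : Set (ℝ × ℝ) := Set.Ioi (x/2) ×ˢ Set.Ioi (x/2) with hE3
  have hSlt : MeasurableSet {p : ℝ × ℝ | x < p.1 + p.2} := hadd measurableSet_Ioi
  have hm1 : MeasurableSet E1 :=
    ((measurable_fst measurableSet_Iic)).inter hSlt
  have hm2 : MeasurableSet E2 :=
    (measurable_snd measurableSet_Iic).inter ((measurable_fst measurableSet_Ioi).inter hSlt)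
  have hm3 : MeasurableSet E3 := measurableSet_Ioi.prod measurableSet_Ioi
  have hunion : {p : ℝ × ℝ | x < p.1 + p.2} = E1 ∪ (E2 ∪ E3) := by
    ext ⟨a, b⟩
    simp only [Set.mem_setOf_eq, Set.mem_union, hE1, hE2, hE3, Set.mem_prod, Set.mem_Ioi]
    constructor
    · intro h
      by_cases h1 : a ≤ x/2
      · exact Or.inl ⟨h1, h⟩
      · by_cases h2 : b ≤ x/2
        · exact Or.inr (Or.inl ⟨h2, lt_of_not_ge h1, h⟩)
        · exact Or.inr (Or.inr ⟨lt_of_not_ge h1, lt_of_not_ge h2⟩)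
    · rintro (⟨_, h⟩ | ⟨_, _, h⟩ | ⟨h1, h2⟩)
      · exact h
      · exact h
      · linarith
  have hd12 : Disjoint E1 (E2 ∪ E3) := by
    rw [Set.disjoint_left]
    rintro ⟨a, b⟩ ⟨h1, _⟩ (⟨_, h2, _⟩ | ⟨h2, _⟩) <;> exact absurd h2 (not_lt.2 h1)
  have hd23 : Disjoint E2 E3 := by
    rw [Set.disjoint_left]
    rintro ⟨a, b⟩ ⟨h1, _, _⟩ ⟨_, h2⟩
    exact absurd h2 (not_lt.2 h1)
  rw [hE, hunion, measure_union hd12 (hm2.union hm3), measure_union hd23 hm3]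
  have hv1 : μ.prod μ E1 = ∫⁻ a in Set.Iic (x/2), μ (Set.Ioi (x - a)) ∂μ := by
    rw [Measure.prod_apply hm1, ← lintegral_indicator measurableSet_Iic]
    refine lintegral_congr fun a => ?_
    by_cases h : a ≤ x/2
    · have : Prod.mk a ⁻¹' E1 = Set.Ioi (x - a) := by
        ext b
        simp only [Set.mem_preimage, hE1, Set.mem_setOf_eq, Set.mem_Ioi]
        constructor
        · rintro ⟨_, hb⟩; linarith
        · intro hb; exact ⟨h, by linarith⟩
      simp [this, Set.indicator_of_mem (Set.mem_Iic.2 h)]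
    · have : Prod.mk a ⁻¹' E1 = ∅ := by
        ext b; simp only [Set.mem_preimage, hE1, Set.mem_setOf_eq, Set.mem_empty_iff_false,
          iff_false, not_and]
        intro hh; exact absurd hh h
      simp [this, Set.indicator_of_notMem (fun hh => h (Set.mem_Iic.1 hh))]
  have hv2 : μ.prod μ E2 = ∫⁻ b in Set.Iic (x/2), μ (Set.Ioi (x - b)) ∂μ := by
    rw [Measure.prod_apply_symm hm2, ← lintegral_indicator measurableSet_Iic]
    refine lintegral_congr fun b => ?_
    by_cases h : b ≤ x/2
    · have : (fun a => (a, b)) ⁻¹' E2 = Set.Ioi (x - b) := by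
        ext a
        simp only [Set.mem_preimage, hE2, Set.mem_setOf_eq, Set.mem_Ioi]
        constructor
        · rintro ⟨_, _, hb⟩; linarith
        · intro ha; exact ⟨h, by linarith, by linarith⟩
      simp [this, Set.indicator_of_mem (Set.mem_Iic.2 h)]
    · have : (fun a => (a, b)) ⁻¹' E2 = ∅ := by
        ext a; simp only [Set.mem_preimage, hE2, Set.mem_setOf_eq, Set.mem_empty_iff_false,
          iff_false, not_and]
        intro hh; exact absurd hh h
      simp [this, Set.indicator_of_notMem (fun hh => h (Set.mem_Iic.1 hh))]
  rw [hv1, hv2, Measure.prod_prod]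
  ring


lemma measurable_tailFun (μ : Measure ℝ) : Measurable (fun s : ℝ => μ (Set.Ioi s)) :=
  Antitone.measurable (fun _ _ hst => measure_mono (Set.Ioi_subset_Ioi hst))

lemma tailDist_conv_eq (μ : Measure ℝ) [IsProbabilityMeasure μ] (x : ℝ) :
    tailDist (convDist μ μ) x =
      2 * (∫ a in Set.Iic (x/2), tailDist μ (x - a) ∂μ) + tailDist μ (x/2) ^ 2 := by
  have hmeas : Measurable (fun a : ℝ => μ (Set.Ioi (x - a))) :=
    (measurable_tailFun μ).comp (measurable_const.sub measurable_id)
  have hfin : (∫⁻ a in Set.Iic (x/2), μ (Set.Ioi (x - a)) ∂μ) ≠ ⊤ := by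
    have h1 : (∫⁻ a in Set.Iic (x/2), μ (Set.Ioi (x - a)) ∂μ) ≤ μ (Set.Iic (x/2)) := by
      calc (∫⁻ a in Set.Iic (x/2), μ (Set.Ioi (x - a)) ∂μ)
          ≤ ∫⁻ _ in Set.Iic (x/2), 1 ∂μ := lintegral_mono fun a => prob_le_one
        _ = μ (Set.Iic (x/2)) := by simp
    exact ne_of_lt (lt_of_le_of_lt h1 (measure_lt_top _ _))
  rw [tailDist, conv_tail_decomp μ x]
  rw [ENNReal.toReal_add (ENNReal.mul_ne_top (by simp) hfin) (ENNReal.mul_ne_top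
    (measure_ne_top _ _) (measure_ne_top _ _))]
  congr 1
  · rw [ENNReal.toReal_mul,
      ← integral_toReal (hmeas.aemeasurable.restrict)
        (ae_of_all _ (fun a => measure_lt_top _ _))]
    norm_num
    rfl
  · rw [ENNReal.toReal_mul, sq]
    rfl


lemma JA_tendsto {μ : Measure ℝ} [IsProbabilityMeasure μ] {α : ℝ}
    (hpos : ∀ x, 0 < tailDist μ x)
    (hL : ∀ y : ℝ, Tendsto (fun x => tailDist μ (x - y) / tailDist μ x) atTop
      (nhds (Real.exp (α * y))))
    (ρ : Measure ℝ) [IsFiniteMeasure ρ] (A : ℝ) :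
    Tendsto (fun x => (∫ t in Set.Iic A, tailDist μ (x - t) ∂ρ) / tailDist μ x) atTop
      (nhds (∫ t in Set.Iic A, Real.exp (α * t) ∂ρ)) := by
  have key : ∀ x : ℝ, (∫ t in Set.Iic A, tailDist μ (x - t) ∂ρ) / tailDist μ x
      = ∫ t in Set.Iic A, tailDist μ (x - t) / tailDist μ x ∂ρ := by
    intro x
    rw [integral_div]
  simp only [key]
  -- dominated convergence
  have hbound : ∀ᶠ x in atTop, tailDist μ (x - A) / tailDist μ x ≤ Real.exp (α * A) + 1 := by
    have := (hL A).eventually (eventually_le_nhds (lt_add_of_pos_right _ one_pos))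
    exact this
  refine tendsto_integral_filter_of_dominated_convergence
    (fun _ => Real.exp (α * A) + 1) ?_ ?_ ?_ ?_
  · refine Eventually.of_forall (fun x => ?_)
    exact ((measurable_tailDist.comp (measurable_const.sub measurable_id)).div_const
      _).aestronglyMeasurable
  · filter_upwards [hbound] with x hx
    refine ae_restrict_of_forall_mem measurableSet_Iic (fun t ht => ?_)
    have h1 : tailDist μ (x - t) ≤ tailDist μ (x - A) :=
      tailDist_anti (by simp only [Set.mem_Iic] at ht; linarith)
    have h2 : 0 ≤ tailDist μ (x - t) / tailDist μ x :=
      div_nonneg tailDist_nonneg tailDist_nonneg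
    rw [Real.norm_eq_abs, abs_of_nonneg h2]
    refine le_trans ?_ hx
    gcongr
    exact (hpos x).le
  · exact integrable_const _
  · refine ae_of_all _ (fun t => hL t)


lemma tendsto_truncated_exp (ρ : Measure ℝ) {α : ℝ}
    (hint : Integrable (fun x => Real.exp (α * x)) ρ) :
    Tendsto (fun A : ℝ => ∫ t in Set.Iic A, Real.exp (α * t) ∂ρ) atTop
      (nhds (∫ t, Real.exp (α * t) ∂ρ)) := by
  have h := tendsto_setIntegral_of_monotone (f := fun t => Real.exp (α * t)) (μ := ρ)
    (s := fun A : ℝ => Set.Iic A)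
    (fun _ => measurableSet_Iic) (fun a b hab => Set.Iic_subset_Iic.2 hab)
    (by rw [Set.iUnion_Iic]; exact hint.integrableOn)
  rwa [Set.iUnion_Iic, setIntegral_univ] at h

lemma integrable_tail_slice (μ : Measure ℝ) [IsProbabilityMeasure μ]
    (ρ : Measure ℝ) [IsFiniteMeasure ρ] (x : ℝ) (s : Set ℝ) :
    IntegrableOn (fun t => tailDist μ (x - t)) s ρ := by
  refine Integrable.integrableOn ?_
  refine Integrable.mono' (integrable_const 1)
    ((measurable_tailDist.comp (measurable_const.sub measurable_id)).aestronglyMeasurable) ?_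
  refine ae_of_all _ (fun t => ?_)
  rw [Real.norm_eq_abs, abs_of_nonneg tailDist_nonneg]
  exact tailDist_le_one

lemma tail_slice_nonneg (μ : Measure ℝ) (ρ : Measure ℝ) (x : ℝ) (s : Set ℝ) :
    0 ≤ ∫ t in s, tailDist μ (x - t) ∂ρ :=
  integral_nonneg (fun t => tailDist_nonneg)

lemma tail_split (μ : Measure ℝ) [IsProbabilityMeasure μ] (ρ : Measure ℝ) [IsFiniteMeasure ρ]
    {A x : ℝ} (h : A ≤ x / 2) :
    ∫ t in Set.Iic (x/2), tailDist μ (x - t) ∂ρ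
      = (∫ t in Set.Iic A, tailDist μ (x - t) ∂ρ)
        + ∫ t in Set.Ioc A (x/2), tailDist μ (x - t) ∂ρ := by
  rw [← setIntegral_union (Set.Iic_disjoint_Ioc le_rfl) measurableSet_Ioc
    (integrable_tail_slice μ ρ x _) (integrable_tail_slice μ ρ x _),
    Set.Iic_union_Ioc_eq_Iic h]


def mgfVal' (μ : Measure ℝ) (α : ℝ) : ℝ := ∫ x, Real.exp (α * x) ∂μ

set_option maxHeartbeats 1000000 in
lemma conv_tail_limit
    {μ ν : Measure ℝ} [IsProbabilityMeasure μ] [IsProbabilityMeasure ν] {α : ℝ}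
    (hposT : ∀ x, 0 < tailDist μ x) (hposU : ∀ x, 0 < tailDist ν x)
    (hLT : ∀ y : ℝ, Tendsto (fun x => tailDist μ (x - y) / tailDist μ x) atTop
      (nhds (Real.exp (α * y))))
    (hLU : ∀ y : ℝ, Tendsto (fun x => tailDist ν (x - y) / tailDist ν x) atTop
      (nhds (Real.exp (α * y))))
    (hintT : Integrable (fun x => Real.exp (α * x)) μ)
    (hintU : Integrable (fun x => Real.exp (α * x)) ν)
    (hconvU : Tendsto (fun x => tailDist (convDist ν ν) x / tailDist ν x) atTop
      (nhds (2 * mgfVal' ν α)))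
    {C : ℝ≥0∞} (hC : C ≠ ⊤) (hcomp : μ ≤ C • ν)
    {c : ℝ} (hc : 0 < c) (hlow : ∀ x, c * tailDist ν x ≤ tailDist μ x) :
    Tendsto (fun x => tailDist (convDist μ μ) x / tailDist μ x) atTop
      (nhds (2 * mgfVal' μ α)) := by
  classical
  set T := tailDist μ with hT
  set U := tailDist ν with hU
  set K := C.toReal with hK
  have hK0 : 0 ≤ K := ENNReal.toReal_nonneg
  -- tail comparison
  have htail : ∀ s : ℝ, T s ≤ K * U s := by
    intro s
    have h1 : μ (Set.Ioi s) ≤ C * ν (Set.Ioi s) := by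
      have := hcomp (Set.Ioi s)
      simpa [Measure.smul_apply, smul_eq_mul] using this
    have := ENNReal.toReal_mono (ENNReal.mul_ne_top hC (measure_ne_top _ _)) h1
    rwa [ENNReal.toReal_mul] at this
  -- set-integral comparison
  have hint_comp : ∀ (s : Set ℝ) (x : ℝ), MeasurableSet s →
      (∫ t in s, T (x - t) ∂μ) ≤ K * K * ∫ t in s, U (x - t) ∂ν := by
    intro s x hs
    have step1 : (∫ t in s, T (x - t) ∂μ) ≤ ∫ t in s, K * U (x - t) ∂μ :=
      integral_mono_ae (integrable_tail_slice μ μ x s)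
        ((integrable_tail_slice ν μ x s).const_mul K)
        (ae_of_all _ (fun t => htail (x - t)))
    have step2 : (∫ t in s, K * U (x - t) ∂μ) ≤ ∫ t in s, K * U (x - t) ∂(C • ν) := by
      refine integral_mono_measure (Measure.restrict_mono le_rfl hcomp) ?_ ?_
      · exact ae_of_all _ (fun t => mul_nonneg hK0 tailDist_nonneg)
      · rw [Measure.restrict_smul]
        exact (((integrable_tail_slice ν ν x s).const_mul K).smul_measure hC)
    have step3 : (∫ t in s, K * U (x - t) ∂(C • ν)) = K * K * ∫ t in s, U (x - t) ∂ν := by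
      rw [Measure.restrict_smul, integral_smul_measure, integral_const_mul]
      simp only [smul_eq_mul, ← hK]
      ring
    calc (∫ t in s, T (x - t) ∂μ) ≤ _ := step1
      _ ≤ _ := step2
      _ = _ := step3
  -- notation for truncated integrals
  rw [Metric.tendsto_nhds]
  intro ε hε
  set mT := mgfVal' μ α with hmT
  set mU := mgfVal' ν α with hmU
  set B := K * K / c with hB
  have hBnn : 0 ≤ B := div_nonneg (mul_nonneg hK0 hK0) hc.le
  set δ : ℝ := ε / 4 with hδ
  have hδpos : 0 < δ := by positivity
  set η : ℝ := (ε / 4) / (11 * B + 1) with hη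
  have hηpos : 0 < η := by positivity
  have hBη : 11 * B * η ≤ ε / 4 := by
    rw [hη]
    rw [div_eq_mul_inv, ← mul_assoc]
    rw [mul_comm (11 * B) (ε / 4), mul_assoc]
    have h1 : (11 * B) * (11 * B + 1)⁻¹ ≤ 1 := by
      rw [← div_eq_mul_inv, div_le_one (by positivity)]
      linarith
    nlinarith [hε.le]
  -- choose A
  have htrunc1 := tendsto_truncated_exp μ hintT
  have htrunc2 := tendsto_truncated_exp ν hintU
  have hev : ∀ᶠ A in (atTop : Filter ℝ),
      (mT - δ ≤ ∫ t in Set.Iic A, Real.exp (α * t) ∂μ) ∧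
      (mU - η ≤ ∫ t in Set.Iic A, Real.exp (α * t) ∂ν) ∧ 0 ≤ A := by
    have e1 := htrunc1.eventually (eventually_ge_nhds (show mT - δ < mT by linarith))
    have e2 := htrunc2.eventually (eventually_ge_nhds (show mU - η < mU by linarith))
    filter_upwards [e1, e2, eventually_ge_atTop (0:ℝ)] with A h1 h2 h3
    exact ⟨h1, h2, h3⟩
  obtain ⟨A, hA1, hA2, hA0⟩ := hev.exists
  set IAμ := ∫ t in Set.Iic A, Real.exp (α * t) ∂μ with hIAμ
  set IAν := ∫ t in Set.Iic A, Real.exp (α * t) ∂ν with hIAν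
  have hIAμ_le : IAμ ≤ mT :=
    setIntegral_le_integral hintT (ae_of_all _ (fun t => (Real.exp_pos _).le))
  have hIAν_le : IAν ≤ mU :=
    setIntegral_le_integral hintU (ae_of_all _ (fun t => (Real.exp_pos _).le))
  -- eventual statements in x
  have hJT := (JA_tendsto hposT hLT μ A).eventually
    (eventually_abs_sub_lt IAμ (show (0:ℝ) < δ/2 by linarith))
  have hJU := (JA_tendsto hposU hLU ν A).eventually
    (eventually_abs_sub_lt IAν hηpos)
  have hCU := hconvU.eventually (eventually_abs_sub_lt (2 * mU) hηpos)
  filter_upwards [hJT, hJU, hCU, eventually_ge_atTop (2 * A)] with x hxJT hxJU hxCU hxA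
  have hxA' : A ≤ x / 2 := by linarith
  -- decompositions
  have hdT := tailDist_conv_eq μ x
  have hdU := tailDist_conv_eq ν x
  set JT := ∫ t in Set.Iic A, T (x - t) ∂μ with hJTdef
  set MT := ∫ t in Set.Ioc A (x/2), T (x - t) ∂μ with hMTdef
  set JU := ∫ t in Set.Iic A, U (x - t) ∂ν with hJUdef
  set MU := ∫ t in Set.Ioc A (x/2), U (x - t) ∂ν with hMUdef
  have hRT : (∫ t in Set.Iic (x/2), T (x - t) ∂μ) = JT + MT := tail_split μ μ hxA'
  have hRU : (∫ t in Set.Iic (x/2), U (x - t) ∂ν) = JU + MU := tail_split ν ν hxA'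
  have hMTnn : 0 ≤ MT := tail_slice_nonneg μ μ x _
  have hMUnn : 0 ≤ MU := tail_slice_nonneg ν ν x _
  have hJTnn : 0 ≤ JT := tail_slice_nonneg μ μ x _
  have hJUnn : 0 ≤ JU := tail_slice_nonneg ν ν x _
  have hTx := hposT x
  have hUx := hposU x
  rw [abs_sub_lt_iff] at hxJT hxJU hxCU
  -- convert hxCU
  have hCUx : 2 * (JU / U x) + 2 * (MU / U x) + U (x/2)^2 / U x < 2 * mU + η := by
    have h0 : tailDist (convDist ν ν) x / U x
        = 2 * (JU / U x) + 2 * (MU / U x) + U (x/2)^2 / U x := by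
      rw [hdU, hRU]
      field_simp
      ring
    have h2 := hxCU.1
    rw [h0] at h2
    linarith
  have hJUx : mU - 2 * η ≤ JU / U x := by
    have := hxJU.2
    linarith
  have hMUx : MU / U x ≤ 3 * η := by
    have hsq : 0 ≤ U (x/2)^2 / U x := div_nonneg (sq_nonneg _) hUx.le
    linarith
  have hUsq : U (x/2)^2 / U x ≤ 5 * η := by
    have hMU2 : 0 ≤ MU / U x := div_nonneg hMUnn hUx.le
    linarith
  -- transfer to μ side
  have hMT_le : MT ≤ K * K * MU := hint_comp _ x measurableSet_Ioc
  have hTU : c * U x ≤ T x := hlow x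
  have hMTx : MT / T x ≤ B * (3 * η) := by
    have h1 : MT / T x ≤ (K * K * MU) / (c * U x) :=
      div_le_div₀ (by positivity) hMT_le (by positivity) hTU
    have h2 : (K * K * MU) / (c * U x) = B * (MU / U x) := by
      rw [hB, div_mul_div_comm]
    have h3 : B * (MU / U x) ≤ B * (3 * η) :=
      mul_le_mul_of_nonneg_left hMUx hBnn
    linarith
  have hTsq : T (x/2)^2 / T x ≤ B * (5 * η) := by
    have h1 : T (x/2)^2 ≤ (K * K) * U (x/2)^2 := by
      have ht := htail (x/2)
      have h0 : (0:ℝ) ≤ T (x/2) := tailDist_nonneg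
      have h5 : T (x/2)^2 ≤ (K * U (x/2))^2 := pow_le_pow_left₀ h0 ht 2
      calc T (x/2)^2 ≤ (K * U (x/2))^2 := h5
        _ = (K * K) * U (x/2)^2 := by ring
    have h2 : T (x/2)^2 / T x ≤ ((K * K) * U (x/2)^2) / (c * U x) :=
      div_le_div₀ (by positivity) h1 (by positivity) hTU
    have h3 : ((K * K) * U (x/2)^2) / (c * U x) = B * (U (x/2)^2 / U x) := by
      rw [hB, div_mul_div_comm]
    have h4 : B * (U (x/2)^2 / U x) ≤ B * (5 * η) :=
      mul_le_mul_of_nonneg_left hUsq hBnn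
    linarith
  -- assemble
  have hgoal_eq : tailDist (convDist μ μ) x / T x
      = 2 * (JT / T x) + 2 * (MT / T x) + T (x/2)^2 / T x := by
    rw [hdT, hRT]
    field_simp
    ring
  rw [Real.dist_eq, hgoal_eq, abs_sub_lt_iff]
  have hJT1 := hxJT.1
  have hJT2 := hxJT.2
  have hMTnn' : 0 ≤ MT / T x := div_nonneg hMTnn hTx.le
  have hTsqnn : 0 ≤ T (x/2)^2 / T x := div_nonneg (sq_nonneg _) hTx.le
  constructor
  · -- upper bound
    have : 2 * (JT / T x) < 2 * IAμ + δ := by linarith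
    have hIA : IAμ ≤ mT := hIAμ_le
    linarith [hBη]
  · -- lower bound
    have : 2 * (JT / T x) > 2 * IAμ - δ := by linarith
    linarith


lemma ratio_littleO {f g : ℝ → ℝ} {e : ℝ} {y : ℝ}
    (hf : ∀ x, 0 < f x) (hfg : ∀ x, f x ≤ g x)
    (h : Tendsto (fun x => f (x - y) / f x) atTop (nhds e)) :
    (fun x => f (x - y) - e * f x) =o[atTop] g := by
  rw [isLittleO_iff]
  intro ε hε
  filter_upwards [h.eventually (eventually_abs_sub_lt e hε)] with x hx
  have hfx := hf x
  have key : f (x - y) - e * f x = (f (x - y) / f x - e) * f x := by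
    field_simp
  rw [Real.norm_eq_abs, Real.norm_eq_abs, key, abs_mul, abs_of_pos hfx]
  have h2 : |f (x - y) / f x - e| * f x ≤ ε * f x :=
    mul_le_mul_of_nonneg_right hx.le hfx.le
  refine h2.trans ?_
  have : f x ≤ |g x| := (hfg x).trans (le_abs_self _)
  exact mul_le_mul_of_nonneg_left this hε.le

variable {n : ℕ}

lemma sum_tail_littleO_comb (V : Fin n → Measure ℝ) [∀ i, IsProbabilityMeasure (V i)]
    (w : Fin n → ℝ) (hw : ∀ i, 0 ≤ w i) (e : ℝ) (y : ℝ) (x : ℝ) :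
    tailDist (posMod (∑ i, ENNReal.ofReal (w i) • V i)) (x - y)
      - e * tailDist (posMod (∑ i, ENNReal.ofReal (w i) • V i)) x
    = ∑ i, w i * (tailDist (posMod (V i)) (x - y) - e * tailDist (posMod (V i)) x) := by
  rw [posMod_mix, tailDist_mix _ w hw, tailDist_mix _ w hw, Finset.mul_sum,
    ← Finset.sum_sub_distrib]
  refine Finset.sum_congr rfl (fun i _ => by ring)


variable {n : ℕ}

lemma hS_eventuallyEq (V : Fin n → Measure ℝ) :
    (fun x => ∑ j, tailDist (V j) x) =ᶠ[atTop]
      (fun x => ∑ j, tailDist (posMod (V j)) x) := by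
  filter_upwards [eventually_ge_atTop (0:ℝ)] with x hx
  exact Finset.sum_congr rfl (fun j _ => (tailDist_posMod_eq _ hx).symm)

lemma forward_insens (hn : 2 ≤ n) (V : Fin n → Measure ℝ) [∀ i, IsProbabilityMeasure (V i)]
    (α : ℝ)
    (H : ∀ p : Fin n → ℝ, (∀ i, 0 < p i ∧ p i < 1) → ∑ i, p i = 1 →
      MemCE α (∑ i, ENNReal.ofReal (p i) • V i))
    (y : ℝ) (i : Fin n) :
    (fun x => tailDist (V i) (x - y) - Real.exp (α * y) * tailDist (V i) x)
      =o[atTop] (fun x => ∑ j, tailDist (V j) x) := by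
  have hn1 : 1 ≤ n := le_trans (by norm_num) hn
  have hnR : (2:ℝ) ≤ (n:ℝ) := by exact_mod_cast hn
  have hnpos : (0:ℝ) < n := by linarith
  have hm : (0:ℝ) < (n:ℝ) - 1 := by linarith
  set e := Real.exp (α * y) with he
  set Ti : Fin n → ℝ → ℝ := fun j x => tailDist (posMod (V j)) x with hTi
  set Stil : ℝ → ℝ := fun x => ∑ j, Ti j x with hStil
  set Dfun : Fin n → ℝ → ℝ := fun j x => Ti j (x - y) - e * Ti j x with hDfun
  set cl : ℝ := 1 / (3 * ((n:ℝ) - 1)) with hcl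
  have hclpos : 0 < cl := by rw [hcl]; positivity
  have hcl3 : cl ≤ 1/3 := by
    rw [hcl]
    rw [div_le_div_iff₀ (by positivity) (by norm_num)]
    linarith
  set a : Fin n → ℝ := fun _ => 1 / (n:ℝ) with ha
  set b : Fin n → ℝ := fun j => if j = i then 2/3 else cl with hb
  have hasimplex : ∀ j, 0 < a j ∧ a j < 1 := by
    intro j
    constructor
    · rw [ha]; positivity
    · rw [ha]
      rw [div_lt_one hnpos]
      linarith
  have hasum : ∑ j, a j = 1 := by
    rw [ha]
    rw [Finset.sum_const, Finset.card_univ, Fintype.card_fin, nsmul_eq_mul]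
    field_simp
  have hbsimplex : ∀ j, 0 < b j ∧ b j < 1 := by
    intro j
    simp only [hb]
    by_cases hj : j = i
    · rw [if_pos hj]; norm_num
    · rw [if_neg hj]; exact ⟨hclpos, by linarith⟩
  have hbsum : ∑ j, b j = 1 := by
    simp only [hb]
    rw [← Finset.add_sum_erase _ _ (Finset.mem_univ i)]
    rw [if_pos rfl]
    have : ∑ j ∈ Finset.univ.erase i, (if j = i then (2:ℝ)/3 else cl)
        = ∑ _j ∈ Finset.univ.erase i, cl := by
      refine Finset.sum_congr rfl (fun j hj => ?_)
      rw [if_neg (Finset.ne_of_mem_erase hj)]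
    rw [this, Finset.sum_const, Finset.card_erase_of_mem (Finset.mem_univ i),
      Finset.card_univ, Fintype.card_fin, nsmul_eq_mul, hcl]
    have hcast : ((n - 1 : ℕ) : ℝ) = (n:ℝ) - 1 := by
      rw [Nat.cast_sub hn1]; norm_num
    rw [hcast]
    field_simp
    ring
  -- little-o for mixtures
  have hmixo : ∀ w : Fin n → ℝ, (∀ j, 0 < w j ∧ w j < 1) → ∑ j, w j = 1 →
      (fun x => ∑ j, w j * Dfun j x) =o[atTop] Stil := by
    intro w hw hwsum
    obtain ⟨hpos, hL, _, _⟩ := H w hw hwsum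
    have hle : ∀ x, tailDist (posMod (∑ j, ENNReal.ofReal (w j) • V j)) x ≤ Stil x := by
      intro x
      rw [posMod_mix, tailDist_mix _ w (fun j => (hw j).1.le)]
      refine Finset.sum_le_sum (fun j _ => ?_)
      calc w j * tailDist (posMod (V j)) x ≤ 1 * tailDist (posMod (V j)) x :=
            mul_le_mul_of_nonneg_right (hw j).2.le tailDist_nonneg
        _ = Ti j x := by rw [one_mul]
    have := ratio_littleO hpos hle (hL y)
    refine this.congr_left (fun x => ?_)
    rw [sum_tail_littleO_comb V w (fun j => (hw j).1.le) e y x]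
  have hao := hmixo a hasimplex hasum
  have hbo := hmixo b hbsimplex hbsum
  -- pointwise identities
  have hbsum_pt : ∀ x, ∑ j, b j * Dfun j x
      = (2/3 - cl) * Dfun i x + cl * ∑ j, Dfun j x := by
    intro x
    simp only [hb]
    rw [← Finset.add_sum_erase _ _ (Finset.mem_univ i), if_pos rfl]
    have h1 : ∑ j ∈ Finset.univ.erase i, (if j = i then (2:ℝ)/3 else cl) * Dfun j x
        = cl * ∑ j ∈ Finset.univ.erase i, Dfun j x := by
      rw [Finset.mul_sum]
      refine Finset.sum_congr rfl (fun j hj => ?_)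
      rw [if_neg (Finset.ne_of_mem_erase hj)]
    rw [h1, Finset.sum_erase_eq_sub (Finset.mem_univ i)]
    ring
  have hasum_pt : ∀ x, ∑ j, a j * Dfun j x = (1/(n:ℝ)) * ∑ j, Dfun j x := by
    intro x
    rw [ha, Finset.mul_sum]
  have hkey : ∀ x, Dfun i x
      = (2/3 - cl)⁻¹ * ((∑ j, b j * Dfun j x) - (cl * n) * ∑ j, a j * Dfun j x) := by
    intro x
    rw [hbsum_pt, hasum_pt]
    have hne : (2:ℝ)/3 - cl ≠ 0 := by
      have : cl < 2/3 := lt_of_le_of_lt hcl3 (by norm_num)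
      linarith
    have hns : (cl * (n:ℝ)) * (1/(n:ℝ) * ∑ j, Dfun j x) = cl * ∑ j, Dfun j x := by
      field_simp
    have h2 : (2/3 - cl) * Dfun i x + cl * (∑ j, Dfun j x)
        - (cl * (n:ℝ)) * (1/(n:ℝ) * ∑ j, Dfun j x) = (2/3 - cl) * Dfun i x := by
      rw [hns]; ring
    rw [h2, inv_mul_cancel_left₀ hne]
  have hcomb : (fun x => (2/3 - cl)⁻¹ * ((∑ j, b j * Dfun j x)
      - (cl * n) * ∑ j, a j * Dfun j x)) =o[atTop] Stil :=
    ((hbo.sub (hao.const_mul_left (cl * n))).const_mul_left _)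
  have hDio : (fun x => Dfun i x) =o[atTop] Stil :=
    hcomb.congr_left (fun x => (hkey x).symm)
  -- transfer to the statement's functions
  refine hDio.congr' ?_ (hS_eventuallyEq V).symm
  filter_upwards [eventually_ge_atTop (max 0 y)] with x hx
  have hx0 : (0:ℝ) ≤ x := le_trans (le_max_left _ _) hx
  have hxy : (0:ℝ) ≤ x - y := by
    have := le_trans (le_max_right 0 y) hx
    linarith
  rw [hDfun]
  simp only [hTi]
  rw [tailDist_posMod_eq _ hxy, tailDist_posMod_eq _ hx0]


lemma mgfVal'_eq (μ : Measure ℝ) (α : ℝ) : mgfVal' μ α = mgfVal μ α := rfl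

variable {n : ℕ}

lemma backward_memCE (hn : 2 ≤ n) (V : Fin n → Measure ℝ) [∀ i, IsProbabilityMeasure (V i)]
    (α : ℝ)
    (q : Fin n → ℝ) (hq : ∀ i, 0 < q i ∧ q i < 1) (hqs : ∑ i, q i = 1)
    (hqCE : MemCE α (∑ i, ENNReal.ofReal (q i) • V i))
    (hins : ∀ y : ℝ, ∀ i : Fin n,
      (fun x => tailDist (V i) (x - y) - Real.exp (α * y) * tailDist (V i) x)
        =o[atTop] (fun x => ∑ j, tailDist (V j) x))
    (p : Fin n → ℝ) (hp : ∀ i, 0 < p i ∧ p i < 1) (hps : ∑ i, p i = 1) :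
    MemCE α (∑ i, ENNReal.ofReal (p i) • V i) := by
  haveI : Nonempty (Fin n) := ⟨⟨0, by omega⟩⟩
  haveI hPq : IsProbabilityMeasure (∑ i, ENNReal.ofReal (q i) • V i) :=
    mix_prob V q (fun i => (hq i).1.le) hqs
  haveI hPp : IsProbabilityMeasure (∑ i, ENNReal.ofReal (p i) • V i) :=
    mix_prob V p (fun i => (hp i).1.le) hps
  set Ti : Fin n → ℝ → ℝ := fun j x => tailDist (posMod (V j)) x with hTi
  set Stil : ℝ → ℝ := fun x => ∑ j, Ti j x with hStil
  have hStil_nonneg : ∀ x, 0 ≤ Stil x :=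
    fun x => Finset.sum_nonneg (fun j _ => tailDist_nonneg)
  have hTmix : ∀ (w : Fin n → ℝ), (∀ i, 0 ≤ w i) → ∀ x,
      tailDist (posMod (∑ i, ENNReal.ofReal (w i) • V i)) x = ∑ i, w i * Ti i x := by
    intro w hw x
    rw [posMod_mix, tailDist_mix _ w hw]
  have hub : ∀ (w : Fin n → ℝ), (∀ i, 0 < w i ∧ w i < 1) → ∀ x,
      tailDist (posMod (∑ i, ENNReal.ofReal (w i) • V i)) x ≤ Stil x := by
    intro w hw x
    rw [hTmix w (fun i => (hw i).1.le)]
    refine Finset.sum_le_sum (fun j _ => ?_)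
    calc w j * Ti j x ≤ 1 * Ti j x :=
          mul_le_mul_of_nonneg_right (hw j).2.le tailDist_nonneg
      _ = Ti j x := one_mul _
  set cp : ℝ := Finset.univ.inf' Finset.univ_nonempty p with hcp
  have hcp_pos : 0 < cp := by
    rw [hcp, Finset.lt_inf'_iff]
    exact fun i _ => (hp i).1
  have hcp_le : ∀ i, cp ≤ p i := fun i => Finset.inf'_le _ (Finset.mem_univ i)
  set cq : ℝ := Finset.univ.inf' Finset.univ_nonempty q with hcq
  have hcq_pos : 0 < cq := by
    rw [hcq, Finset.lt_inf'_iff]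
    exact fun i _ => (hq i).1
  have hcq_le : ∀ i, cq ≤ q i := fun i => Finset.inf'_le _ (Finset.mem_univ i)
  have hlb : ∀ x, cp * Stil x ≤ tailDist (posMod (∑ i, ENNReal.ofReal (p i) • V i)) x := by
    intro x
    rw [hTmix p (fun i => (hp i).1.le), hStil, Finset.mul_sum]
    exact Finset.sum_le_sum (fun j _ =>
      mul_le_mul_of_nonneg_right (hcp_le j) tailDist_nonneg)
  obtain ⟨hposQ, hLQ, hintQ, hconvQ⟩ := hqCE
  have hStil_pos : ∀ x, 0 < Stil x := by
    intro x
    exact lt_of_lt_of_le (hposQ x) (hub q hq x)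
  -- (1) positivity
  have hposP : ∀ x, 0 < tailDist (posMod (∑ i, ENNReal.ofReal (p i) • V i)) x := by
    intro x
    exact lt_of_lt_of_le (mul_pos hcp_pos (hStil_pos x)) (hlb x)
  -- insensitivity in posMod form
  have hDins : ∀ (y : ℝ) (i : Fin n),
      (fun x => Ti i (x - y) - Real.exp (α * y) * Ti i x) =o[atTop] Stil := by
    intro y i
    refine (hins y i).congr' ?_ (hS_eventuallyEq V)
    filter_upwards [eventually_ge_atTop (max 0 y)] with x hx
    have hx0 : (0:ℝ) ≤ x := le_trans (le_max_left _ _) hx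
    have hxy : (0:ℝ) ≤ x - y := by
      have := le_trans (le_max_right 0 y) hx
      linarith
    simp only [hTi]
    rw [tailDist_posMod_eq _ hxy, tailDist_posMod_eq _ hx0]
  -- Stil is big-O of T_p
  have hSO : Stil =O[atTop]
      (fun x => tailDist (posMod (∑ i, ENNReal.ofReal (p i) • V i)) x) := by
    refine IsBigO.of_bound cp⁻¹ (Eventually.of_forall (fun x => ?_))
    rw [Real.norm_eq_abs, Real.norm_eq_abs, abs_of_nonneg (hStil_nonneg x),
      abs_of_nonneg tailDist_nonneg]
    rw [inv_mul_eq_div, le_div_iff₀ hcp_pos, mul_comm]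
    exact hlb x
  -- (2) the L(alpha) property
  have hLP : ∀ y : ℝ, Tendsto (fun x =>
      tailDist (posMod (∑ i, ENNReal.ofReal (p i) • V i)) (x - y) /
      tailDist (posMod (∑ i, ENNReal.ofReal (p i) • V i)) x) atTop
      (nhds (Real.exp (α * y))) := by
    intro y
    set e := Real.exp (α * y) with he
    have hsum_o : (fun x => ∑ i, p i * (Ti i (x - y) - e * Ti i x)) =o[atTop] Stil := by
      refine IsLittleO.fun_sum (fun i _ => ?_)
      exact (hDins y i).const_mul_left (p i)
    have hDp : (fun x =>
        tailDist (posMod (∑ i, ENNReal.ofReal (p i) • V i)) (x - y)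
          - e * tailDist (posMod (∑ i, ENNReal.ofReal (p i) • V i)) x) =o[atTop] Stil := by
      refine hsum_o.congr_left (fun x => ?_)
      rw [sum_tail_littleO_comb V p (fun i => (hp i).1.le) e y x]
    have hDpT := (hDp.trans_isBigO hSO).tendsto_div_nhds_zero
    have heq : ∀ x : ℝ, tailDist (posMod (∑ i, ENNReal.ofReal (p i) • V i)) (x - y) /
        tailDist (posMod (∑ i, ENNReal.ofReal (p i) • V i)) x
        = (tailDist (posMod (∑ i, ENNReal.ofReal (p i) • V i)) (x - y)
            - e * tailDist (posMod (∑ i, ENNReal.ofReal (p i) • V i)) x) /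
          tailDist (posMod (∑ i, ENNReal.ofReal (p i) • V i)) x + e := by
      intro x
      have hne := (hposP x).ne'
      field_simp
      ring
    have hfinal := hDpT.add (tendsto_const_nhds (α := ℝ) (x := e))
    rw [zero_add] at hfinal
    exact Tendsto.congr (fun x => (heq x).symm) hfinal
  -- (3) integrability
  have heach : ∀ i, Integrable (fun x => Real.exp (α * x)) (posMod (V i)) := by
    intro i
    rw [posMod_mix] at hintQ
    have h1 := integrable_finset_sum_measure.mp hintQ i (Finset.mem_univ i)
    exact (integrable_smul_measure
      (by simp [ENNReal.ofReal_eq_zero, not_le, (hq i).1]) ENNReal.ofReal_ne_top).mp h1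
  have hintP : Integrable (fun x => Real.exp (α * x))
      (posMod (∑ i, ENNReal.ofReal (p i) • V i)) := by
    rw [posMod_mix]
    refine integrable_finset_sum_measure.mpr (fun i _ => ?_)
    exact (integrable_smul_measure
      (by simp [ENNReal.ofReal_eq_zero, not_le, (hp i).1]) ENNReal.ofReal_ne_top).mpr (heach i)
  -- (4) convolution tail
  refine ⟨hposP, hLP, hintP, ?_⟩
  have hcomp : posMod (∑ i, ENNReal.ofReal (p i) • V i)
      ≤ ENNReal.ofReal cq⁻¹ • posMod (∑ i, ENNReal.ofReal (q i) • V i) := by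
    rw [posMod_mix, posMod_mix]
    rw [Measure.le_iff]
    intro s hs
    rw [Measure.smul_apply, smul_eq_mul, Measure.finset_sum_apply, Measure.finset_sum_apply,
      Finset.mul_sum]
    refine Finset.sum_le_sum (fun i _ => ?_)
    simp only [Measure.smul_apply, smul_eq_mul, ← mul_assoc]
    refine mul_le_mul_left ?_ _
    rw [← ENNReal.ofReal_mul (by positivity)]
    refine ENNReal.ofReal_le_ofReal ?_
    rw [← div_eq_inv_mul, le_div_iff₀ hcq_pos]
    calc p i * cq ≤ 1 * cq := mul_le_mul_of_nonneg_right (hp i).2.le hcq_pos.le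
      _ = cq := one_mul _
      _ ≤ q i := hcq_le i
  have hlowPQ : ∀ x, cp * tailDist (posMod (∑ i, ENNReal.ofReal (q i) • V i)) x
      ≤ tailDist (posMod (∑ i, ENNReal.ofReal (p i) • V i)) x := by
    intro x
    refine le_trans ?_ (hlb x)
    exact mul_le_mul_of_nonneg_left (hub q hq x) hcp_pos.le
  have := conv_tail_limit hposP hposQ hLP hLQ hintP hintQ
    (by rw [mgfVal'_eq]; exact hconvQ) ENNReal.ofReal_ne_top hcomp hcp_pos hlowPQ
  rw [mgfVal'_eq] at this
  exact this


end

/-- Lemma 3.2: equivalence between membership of every convex combination in `S(α)` and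
membership of some convex combination plus the insensitivity relation
`V̄ᵢ(x-y) - e^{αy} V̄ᵢ(x) = o(Σⱼ V̄ⱼ(x))`. -/
theorem stmt_9
    (n : ℕ) (hn : 2 ≤ n)
    (V : Fin n → Measure ℝ) [∀ i, IsProbabilityMeasure (V i)]
    (α : ℝ) (hα : 0 ≤ α) :
    (∀ p : Fin n → ℝ, (∀ i, 0 < p i ∧ p i < 1) → ∑ i, p i = 1 →
        MemCE α (∑ i, ENNReal.ofReal (p i) • V i)) ↔
      ((∃ p : Fin n → ℝ, (∀ i, 0 < p i ∧ p i < 1) ∧ ∑ i, p i = 1 ∧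
          MemCE α (∑ i, ENNReal.ofReal (p i) • V i)) ∧
        ∀ y : ℝ, ∀ i : Fin n,
          (fun x => tailDist (V i) (x - y) - Real.exp (α * y) * tailDist (V i) x)
            =o[atTop] (fun x => ∑ j, tailDist (V j) x)) := by
  constructor
  · intro H
    have hnR : (2:ℝ) ≤ (n:ℝ) := by exact_mod_cast hn
    have hnpos : (0:ℝ) < n := by linarith
    refine ⟨⟨fun _ => 1/(n:ℝ), fun i => ⟨by positivity, ?_⟩, ?_, ?_⟩, ?_⟩
    · rw [div_lt_one hnpos]; linarith
    · rw [Finset.sum_const, Finset.card_univ, Fintype.card_fin, nsmul_eq_mul]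
      field_simp
    · refine H _ (fun i => ⟨by positivity, ?_⟩) ?_
      · rw [div_lt_one hnpos]; linarith
      · rw [Finset.sum_const, Finset.card_univ, Fintype.card_fin, nsmul_eq_mul]
        field_simp
    · exact fun y i => forward_insens hn V α H y i
  · rintro ⟨⟨q, hq, hqs, hqCE⟩, hins⟩ p hp hps
    exact backward_memCE hn V α q hq hqs hqCE hins p hp hps
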